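/- For every d × K real matrix X, 𝔼_r‖X − (m/d)·A(r)ᵀ·A(r)·X‖_F² = (1 − m/d)·‖X‖_F², where ‖·‖_F is the Frobenius norm. (This is the matrix form of the compression-operator identity used in step (a) of the variant of Lemma 18 for the analog implementation.) -/

import Mathlib

open Matrix BigOperators

/-- The random linear coding matrix `A(r) = (1/√m)·H·diag(r)`. -/
noncomputable def rlcA (m d : ℕ) (H : Matrix (Fin m) (Fin d) ℝ) (r : Fin d → ℝ) :
    Matrix (Fin m) (Fin d) ℝ :=
  (Real.sqrt m)⁻¹ • (H * Matrix.diagonal r)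

/-- The sign vector in `{−1,+1}^d` encoded by a Boolean vector. -/
def signVec {d : ℕ} (s : Fin d → Bool) : Fin d → ℝ := fun i => if s i then 1 else -1

/-- The squared Frobenius norm `‖M‖_F²` of a real matrix. -/
noncomputable def frobSq {a b : ℕ} (M : Matrix (Fin a) (Fin b) ℝ) : ℝ :=
  ∑ i, ∑ j, (M i j) ^ 2


lemma signVec_sq {d : ℕ} (s : Fin d → Bool) (i : Fin d) :
    signVec s i * signVec s i = 1 := by
  simp only [signVec]; cases s i <;> norm_num

lemma sign_expect {d : ℕ} (i j : Fin d) :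
    ∑ s : Fin d → Bool, signVec s i * signVec s j = if i = j then (2:ℝ)^d else 0 := by
  rcases eq_or_ne i j with rfl | hij
  · simp [signVec_sq, Finset.card_univ]
  · simp only [if_neg hij]
    have hinv : Function.Involutive (fun s : Fin d → Bool => Function.update s i (!(s i))) := by
      intro s
      funext t
      rcases eq_or_ne t i with rfl | ht
      · simp [Function.update_self]
      · simp [Function.update_of_ne ht]
    set e := hinv.toPerm with he
    have hcomp := Equiv.sum_comp e (fun s => signVec s i * signVec s j)
    have hneg : ∀ s : Fin d → Bool,
        signVec (e s) i * signVec (e s) j = -(signVec s i * signVec s j) := by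
      intro s
      have h1 : signVec (e s) i = -signVec s i := by
        simp only [he, Function.Involutive.toPerm, Equiv.coe_fn_mk, signVec,
          Function.update_self]
        cases s i <;> norm_num
      have h2 : signVec (e s) j = signVec s j := by
        simp only [he, Function.Involutive.toPerm, Equiv.coe_fn_mk, signVec,
          Function.update_of_ne (Ne.symm hij)]
      rw [h1, h2]; ring
    have : ∑ s : Fin d → Bool, signVec s i * signVec s j
        = -∑ s : Fin d → Bool, signVec s i * signVec s j := by
      calc ∑ s : Fin d → Bool, signVec s i * signVec s j
          = ∑ s : Fin d → Bool, signVec (e s) i * signVec (e s) j := hcomp.symm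
        _ = ∑ s : Fin d → Bool, -(signVec s i * signVec s j) := by
            exact Finset.sum_congr rfl fun s _ => hneg s
        _ = -∑ s : Fin d → Bool, signVec s i * signVec s j := by
            rw [Finset.sum_neg_distrib]
    linarith


lemma diag_RR {d : ℕ} (s : Fin d → Bool) :
    Matrix.diagonal (signVec s) * Matrix.diagonal (signVec s)
      = (1 : Matrix (Fin d) (Fin d) ℝ) := by
  rw [Matrix.diagonal_mul_diagonal]
  have h : (fun i => signVec s i * signVec s i) = fun _ => (1:ℝ) :=
    funext (signVec_sq s)
  rw [h, Matrix.diagonal_one]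

lemma expect_RMR {d : ℕ} (M : Matrix (Fin d) (Fin d) ℝ) :
    ∑ s : Fin d → Bool,
        Matrix.diagonal (signVec s) * M * Matrix.diagonal (signVec s)
      = (2:ℝ)^d • Matrix.diagonal (fun i => M i i) := by
  ext i j
  rw [Matrix.sum_apply]
  have h1 : ∀ s : Fin d → Bool,
      (Matrix.diagonal (signVec s) * M * Matrix.diagonal (signVec s)) i j
        = (signVec s i * signVec s j) * M i j := by
    intro s
    rw [Matrix.mul_diagonal, Matrix.diagonal_mul]
    ring
  rw [Finset.sum_congr rfl fun s _ => h1 s, ← Finset.sum_mul, sign_expect]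
  rcases eq_or_ne i j with rfl | hij
  · simp
  · simp [hij, Matrix.diagonal_apply_ne _ hij]

lemma frobSq_eq_trace {a b : ℕ} (M : Matrix (Fin a) (Fin b) ℝ) :
    frobSq M = Matrix.trace (Mᵀ * M) := by
  simp only [frobSq, Matrix.trace, Matrix.diag, Matrix.mul_apply, Matrix.transpose_apply, sq]
  rw [Finset.sum_comm]

lemma smul_step {m d : ℕ} (hm : 0 < m) (hd : 0 < d)
    (H : Matrix (Fin m) (Fin d) ℝ) {K : ℕ} (X : Matrix (Fin d) (Fin K) ℝ)
    (s : Fin d → Bool) :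
    ((m : ℝ) / d) • ((rlcA m d H (signVec s))ᵀ * (rlcA m d H (signVec s) * X))
      = ((d:ℝ)⁻¹ • (Matrix.diagonal (signVec s) * (Hᵀ * H) * Matrix.diagonal (signVec s))) * X := by
  have hmR : (0:ℝ) < m := by exact_mod_cast hm
  set R := Matrix.diagonal (signVec s) with hR
  have hAT : (rlcA m d H (signVec s))ᵀ = (Real.sqrt m)⁻¹ • (R * Hᵀ) := by
    simp [rlcA, Matrix.transpose_smul, Matrix.transpose_mul, Matrix.diagonal_transpose, hR]
  rw [hAT]
  simp only [rlcA, Matrix.smul_mul, Matrix.mul_smul, smul_smul, ← hR]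
  have hsq : (Real.sqrt m)⁻¹ * (Real.sqrt m)⁻¹ = (m:ℝ)⁻¹ := by
    rw [← mul_inv]
    rw [Real.mul_self_sqrt hmR.le]
  rw [hsq]
  have hc : (m:ℝ)/d * (m:ℝ)⁻¹ = (d:ℝ)⁻¹ := by
    field_simp
  rw [hc]
  congr 1
  simp only [Matrix.mul_assoc]

/-- For every `d × K` real matrix `X`,
`𝔼_r‖X − (m/d)·A(r)ᵀ·A(r)·X‖_F² = (1 − m/d)·‖X‖_F²`, where the expectation is over `r`
uniform on `{−1,+1}^d` and `A(r) = (1/√m)·H·diag(r)` with `H` a partial Hadamard matrix. -/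
theorem rlc_compression_contraction_matrix (m d K : ℕ) (hm : 0 < m) (hmd : m ≤ d)
    (H : Matrix (Fin m) (Fin d) ℝ)
    (hH : ∀ i j, H i j = 1 ∨ H i j = -1)
    (horth : H * Hᵀ = (d : ℝ) • (1 : Matrix (Fin m) (Fin m) ℝ))
    (X : Matrix (Fin d) (Fin K) ℝ) :
    ((2 : ℝ) ^ d)⁻¹ *
        ∑ s : Fin d → Bool,
          frobSq (X - ((m : ℝ) / d) •
            ((rlcA m d H (signVec s))ᵀ * (rlcA m d H (signVec s) * X)))
      = (1 - (m : ℝ) / d) * frobSq X := by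
  have hd : 0 < d := lt_of_lt_of_le hm hmd
  have hdR : (0:ℝ) < d := by exact_mod_cast hd
  set G : Matrix (Fin d) (Fin d) ℝ := Hᵀ * H with hGdef
  set R : (Fin d → Bool) → Matrix (Fin d) (Fin d) ℝ :=
    fun s => Matrix.diagonal (signVec s) with hRdef
  set P : (Fin d → Bool) → Matrix (Fin d) (Fin d) ℝ :=
    fun s => (d:ℝ)⁻¹ • (R s * G * R s) with hPdef
  -- entries of G on the diagonal
  have hGii : ∀ i, G i i = (m:ℝ) := by
    intro i
    rw [hGdef, Matrix.mul_apply]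
    have : ∀ k, Hᵀ i k * H k i = 1 := by
      intro k
      rw [Matrix.transpose_apply]
      rcases hH k i with h | h <;> rw [h] <;> norm_num
    rw [Finset.sum_congr rfl fun k _ => this k]
    simp
  have hGG : G * G = (d:ℝ) • G := by
    calc G * G = Hᵀ * (H * Hᵀ) * H := by rw [hGdef]; simp only [Matrix.mul_assoc]
      _ = Hᵀ * ((d:ℝ) • (1 : Matrix (Fin m) (Fin m) ℝ)) * H := by rw [horth]
      _ = (d:ℝ) • G := by
          rw [Matrix.mul_smul, Matrix.mul_one, Matrix.smul_mul, hGdef]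
  -- symmetry of P
  have hGt : Gᵀ = G := by rw [hGdef, Matrix.transpose_mul, Matrix.transpose_transpose]
  have hRt : ∀ s, (R s)ᵀ = R s := by
    intro s
    simp only [hRdef, Matrix.diagonal_transpose]
  have hPt : ∀ s, (P s)ᵀ = P s := by
    intro s
    rw [hPdef]
    simp only [Matrix.transpose_smul, Matrix.transpose_mul, hRt, hGt, Matrix.mul_assoc]
  -- per-sample expansion
  have hexpand : ∀ s : Fin d → Bool,
      frobSq (X - P s * X)
        = Matrix.trace (Xᵀ * X) - 2 * Matrix.trace (Xᵀ * (P s * X))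
            + Matrix.trace (Xᵀ * ((P s * P s) * X)) := by
    intro s
    rw [frobSq_eq_trace]
    rw [Matrix.transpose_sub, Matrix.sub_mul, Matrix.mul_sub, Matrix.mul_sub]
    simp only [Matrix.trace_sub]
    have hcross : Matrix.trace ((P s * X)ᵀ * X) = Matrix.trace (Xᵀ * (P s * X)) := by
      conv_lhs => rw [← Matrix.trace_transpose]
      rw [Matrix.transpose_mul, Matrix.transpose_transpose]
    have hsqr : (P s * X)ᵀ * (P s * X) = Xᵀ * ((P s * P s) * X) := by
      rw [Matrix.transpose_mul, hPt s]
      simp only [Matrix.mul_assoc]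
    rw [hcross, hsqr]
    ring
  -- expectations of P and P²
  have hdiagm : Matrix.diagonal (fun i => G i i) = (m:ℝ) • (1 : Matrix (Fin d) (Fin d) ℝ) := by
    ext i j
    rcases eq_or_ne i j with rfl | hij
    · simp [hGii]
    · simp [Matrix.diagonal_apply_ne _ hij, Matrix.one_apply_ne hij]
  have hsumP : ∑ s : Fin d → Bool, P s = ((2:ℝ)^d * m / d) • (1 : Matrix (Fin d) (Fin d) ℝ) := by
    rw [hPdef]
    simp only [hRdef]
    rw [← Finset.smul_sum, expect_RMR, hdiagm, smul_smul, smul_smul]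
    congr 1
    field_simp
  have hPP : ∀ s : Fin d → Bool, P s * P s
      = ((d:ℝ)⁻¹ * (d:ℝ)⁻¹) • (R s * (G * G) * R s) := by
    intro s
    rw [hPdef]
    simp only [Matrix.smul_mul, Matrix.mul_smul, smul_smul]
    congr 1
    calc R s * G * R s * (R s * G * R s) = R s * G * (R s * R s) * G * R s := by
          simp only [Matrix.mul_assoc]
      _ = R s * (G * G) * R s := by
          rw [hRdef, diag_RR]
          simp only [Matrix.mul_one, Matrix.mul_assoc]
  have hsumPP : ∑ s : Fin d → Bool, P s * P s
      = ((2:ℝ)^d * m / d) • (1 : Matrix (Fin d) (Fin d) ℝ) := by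
    rw [Finset.sum_congr rfl fun s _ => hPP s]
    simp only [hRdef]
    rw [← Finset.smul_sum, expect_RMR]
    have hdiag2 : Matrix.diagonal (fun i => (G * G) i i)
        = ((d:ℝ) * m) • (1 : Matrix (Fin d) (Fin d) ℝ) := by
      ext i j
      rcases eq_or_ne i j with rfl | hij
      · simp [hGG, hGii, Matrix.smul_apply]
      · simp [Matrix.diagonal_apply_ne _ hij, Matrix.one_apply_ne hij]
    rw [hdiag2, smul_smul, smul_smul]
    congr 1
    field_simp
  -- rewrite the summand and sum
  have h2pos : (0:ℝ) < (2:ℝ)^d := by positivity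
  set F : ℝ := Matrix.trace (Xᵀ * X) with hF
  have hFX : frobSq X = F := frobSq_eq_trace X
  have hsummand : ∀ s : Fin d → Bool,
      frobSq (X - ((m : ℝ) / d) •
        ((rlcA m d H (signVec s))ᵀ * (rlcA m d H (signVec s) * X)))
        = F - 2 * Matrix.trace (Xᵀ * (P s * X)) + Matrix.trace (Xᵀ * ((P s * P s) * X)) := by
    intro s
    rw [smul_step hm hd H X s]
    exact hexpand s
  rw [Finset.sum_congr rfl fun s _ => hsummand s]
  rw [Finset.sum_add_distrib, Finset.sum_sub_distrib, ← Finset.mul_sum]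
  have hT1 : ∑ s : Fin d → Bool, Matrix.trace (Xᵀ * (P s * X))
      = ((2:ℝ)^d * m / d) * F := by
    rw [← Matrix.trace_sum]
    have : ∑ s : Fin d → Bool, Xᵀ * (P s * X) = Xᵀ * ((∑ s : Fin d → Bool, P s) * X) := by
      rw [Matrix.sum_mul, Matrix.mul_sum]
    rw [this, hsumP, Matrix.smul_mul, Matrix.one_mul, Matrix.mul_smul, Matrix.trace_smul]
    simp [hF, smul_eq_mul]
  have hT2 : ∑ s : Fin d → Bool, Matrix.trace (Xᵀ * ((P s * P s) * X))
      = ((2:ℝ)^d * m / d) * F := by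
    rw [← Matrix.trace_sum]
    have : ∑ s : Fin d → Bool, Xᵀ * ((P s * P s) * X)
        = Xᵀ * ((∑ s : Fin d → Bool, P s * P s) * X) := by
      rw [Matrix.sum_mul, Matrix.mul_sum]
    rw [this, hsumPP, Matrix.smul_mul, Matrix.one_mul, Matrix.mul_smul, Matrix.trace_smul]
    simp [hF, smul_eq_mul]
  have hT0 : ∑ s : Fin d → Bool, F = (2:ℝ)^d * F := by
    rw [Finset.sum_const, Finset.card_univ]
    simp [nsmul_eq_mul, Fintype.card_fun]
  rw [hT0, hT1, hT2, hFX]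
  field_simp
  ring
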